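/- Let 0 ≤ δ ≤ 1/2 and n, w be naturals with w ≤ n-1. Let r_n(w) = P(Bin(w, 1-δ) + Bin(n-w, δ) > n/2), where the two binomial random variables are independent. Then r_n(w+1) ≥ r_n(w); i.e. r_n is nondecreasing in w. -/

import Mathlib

open Finset

/-- `P(Bin(m,p) = k) = C(m,k) p^k (1-p)^{m-k}`. -/
noncomputable def binomPMF (m : ℕ) (p : ℝ) (k : ℕ) : ℝ :=
  (m.choose k : ℝ) * p ^ k * (1 - p) ^ (m - k)

/-- `r_n(w) = P(Bin(w,1-δ) + Bin(n-w,δ) > n/2)` for independent binomials. -/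
noncomputable def rMaj (n : ℕ) (δ : ℝ) (w : ℕ) : ℝ :=
  ∑ k ∈ Finset.range (w + 1), ∑ j ∈ Finset.range (n - w + 1),
    if n < 2 * (k + j) then binomPMF w (1 - δ) k * binomPMF (n - w) δ j else 0

lemma binom_split (m : ℕ) (p : ℝ) (F : ℕ → ℝ) :
    ∑ k ∈ range (m+2), binomPMF (m+1) p k * F k
      = ∑ k ∈ range (m+1), binomPMF m p k * ((1-p) * F k + p * F (k+1)) := by
  have key : ∀ k ∈ range (m+2), binomPMF (m+1) p k * F k
      = (binomPMF m p k * (1-p) * F k)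
        + (if k = 0 then 0 else binomPMF m p (k-1) * p * F k) := by
    intro k hk
    match k with
    | 0 =>
      simp only [binomPMF, if_pos, Nat.choose_zero_right, Nat.sub_zero, Nat.cast_one,
        pow_zero]
      norm_num
      exact Or.inl (pow_succ _ _)
    | (j+1) =>
      simp only [if_neg (Nat.succ_ne_zero j), Nat.add_sub_cancel]
      unfold binomPMF
      rw [Nat.choose_succ_succ]
      rcases le_or_gt (j+1) m with h | h
      · have h1 : m + 1 - (j+1) = (m - (j+1)) + 1 := by omega
        have h2 : m - j = (m - (j+1)) + 1 := by omega
        rw [h1, h2]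
        push_cast
        ring
      · have hk' : j + 1 < m + 2 := mem_range.mp hk
        have hjm : j = m := by omega
        subst hjm
        have hz : j.choose (j+1) = 0 := Nat.choose_eq_zero_of_lt (by omega)
        rw [hz]
        have h1 : j + 1 - (j+1) = 0 := by omega
        have h2 : j - j = 0 := by omega
        rw [h1, h2]
        push_cast
        ring
  rw [Finset.sum_congr rfl key, Finset.sum_add_distrib]
  have e1 : ∑ k ∈ range (m+2), binomPMF m p k * (1-p) * F k
      = ∑ k ∈ range (m+1), binomPMF m p k * (1-p) * F k := by
    rw [Finset.sum_range_succ]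
    have : binomPMF m p (m+1) = 0 := by
      unfold binomPMF
      rw [Nat.choose_eq_zero_of_lt (by omega)]
      simp
    simp [this]
  have e2 : ∑ k ∈ range (m+2), (if k = 0 then 0 else binomPMF m p (k-1) * p * F k)
      = ∑ k ∈ range (m+1), binomPMF m p k * p * F (k+1) := by
    rw [Finset.sum_range_succ' (fun k => if k = 0 then (0:ℝ) else binomPMF m p (k-1) * p * F k) (m+1)]
    simp
  rw [e1, e2, ← Finset.sum_add_distrib]
  exact Finset.sum_congr rfl fun k _ => by ring

lemma binomPMF_nonneg (m : ℕ) (p : ℝ) (hp0 : 0 ≤ p) (hp1 : p ≤ 1) (k : ℕ) :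
    0 ≤ binomPMF m p k := by
  unfold binomPMF
  have : (0:ℝ) ≤ 1 - p := by linarith
  positivity

/-- `r_n(w)` is nondecreasing in the Hamming weight `w`, for `0 ≤ δ ≤ 1/2`. -/
theorem rMaj_monotone (n w : ℕ) (δ : ℝ) (hδ0 : 0 ≤ δ) (hδ : δ ≤ 1 / 2) (hw : w + 1 ≤ n) :
    rMaj n δ w ≤ rMaj n δ (w + 1) := by
  obtain ⟨m, hm⟩ : ∃ m, n - w = m + 1 := ⟨n - w - 1, by omega⟩
  have hm' : n - (w+1) = m := by omega
  set χ : ℕ → ℝ := fun s => if n < 2*s then 1 else 0 with hχ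
  set G : ℕ → ℝ := fun k => ∑ j ∈ range (m+1), binomPMF m δ j * χ (k+j) with hG
  have step1 : ∀ (a : ℝ) (M : ℕ) (q : ℕ → ℝ) (k : ℕ),
      ∑ j ∈ range M, (if n < 2*(k+j) then a * q j else 0)
        = a * ∑ j ∈ range M, q j * χ (k+j) := by
    intro a M q k
    rw [Finset.mul_sum]
    refine sum_congr rfl fun j _ => ?_
    simp only [hχ]
    split_ifs <;> ring
  have hA : rMaj n δ w = ∑ k ∈ range (w+1), binomPMF w (1-δ) k *
      (∑ j ∈ range (m+1), binomPMF m δ j * ((1-δ) * χ (k+j) + δ * χ (k+(j+1)))) := by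
    unfold rMaj
    rw [hm]
    refine sum_congr rfl fun k _ => ?_
    rw [step1 _ (m+1+1) _ k, binom_split m δ (fun j => χ (k+j))]
  have hB : rMaj n δ (w+1) = ∑ k ∈ range (w+1), binomPMF w (1-δ) k *
      ((1-(1-δ)) * G k + (1-δ) * G (k+1)) := by
    unfold rMaj
    rw [hm']
    have hc : ∀ k ∈ range (w+1+1),
        ∑ j ∈ range (m+1), (if n < 2*(k+j) then binomPMF (w+1) (1-δ) k * binomPMF m δ j else 0)
          = binomPMF (w+1) (1-δ) k * G k := fun k _ => step1 _ (m+1) _ k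
    rw [sum_congr rfl hc, binom_split w (1-δ) G]
  rw [hA, hB]
  refine Finset.sum_le_sum fun k _ => ?_
  have hpk : 0 ≤ binomPMF w (1-δ) k := binomPMF_nonneg _ _ (by linarith) (by linarith) _
  refine mul_le_mul_of_nonneg_left ?_ hpk
  have hGk1 : (∑ j ∈ range (m+1), binomPMF m δ j * χ (k+1+j))
      = ∑ j ∈ range (m+1), binomPMF m δ j * χ (k+(j+1)) := by
    refine sum_congr rfl fun j _ => ?_
    have : k + 1 + j = k + (j+1) := by omega
    rw [this]
  simp only [hG]
  rw [hGk1]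
  rw [Finset.mul_sum, Finset.mul_sum, ← Finset.sum_add_distrib]
  refine Finset.sum_le_sum fun j _ => ?_
  have hqj : 0 ≤ binomPMF m δ j := binomPMF_nonneg _ _ hδ0 (by linarith) _
  have hχ1 : χ (k+j) ≤ χ (k+(j+1)) := by
    simp only [hχ]
    split_ifs with h1 h2 h3
    · norm_num
    · exact (h2 (by omega)).elim
    · norm_num
    · norm_num
  have hχ0 : 0 ≤ χ (k+j) := by simp only [hχ]; split_ifs <;> norm_num
  nlinarith [mul_le_mul_of_nonneg_left hχ1 hqj]
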